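/- If P ≠ ∅, then the intersection Q^∞ of the sets Qᵏ over all k ∈ ℕ is nonempty, its infimum belongs to P, and inf Q^∞ = inf P. -/

import Mathlib

open Classical in
/-- The decreasing sequence of sets `Qᵏ`: `Q⁰ = [0,1]` and
`Q^{k+1} = {q ∈ Qᵏ : (1−δ)·u*(q) + δ·Uᵏ(q) ≥ m(q)}`, where `Uᵏ` is the chord of `m`
from `(inf Qᵏ, m(inf Qᵏ))` to `(1, m(1))` (constant `m(1)` if `inf Qᵏ = 1`). -/
noncomputable def Qseq (m ustar : ℝ → ℝ) (δ : ℝ) : ℕ → Set ℝ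
  | 0 => Set.Icc 0 1
  | k + 1 =>
      if Qseq m ustar δ k = ∅ then (∅ : Set ℝ)
      else
        {q ∈ Qseq m ustar δ k |
          (1 - δ) * ustar q +
            δ * (if sInf (Qseq m ustar δ k) < 1 then
                ((1 - q) * m (sInf (Qseq m ustar δ k))
                  + (q - sInf (Qseq m ustar δ k)) * m 1) / (1 - sInf (Qseq m ustar δ k))
              else m 1)
          ≥ m q}

/-- if `P ≠ ∅` then `Q^∞ = ⋂ₖ Qᵏ` is nonempty, its infimum belongs to
`P`, and `inf Q^∞ = inf P`. -/
theorem Qseq_inter_nonempty_of_P_nonempty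
    (m ustar : ℝ → ℝ) (δ : ℝ) (hδ : δ ∈ Set.Ioo (0 : ℝ) 1)
    (hconv : ConvexOn ℝ (Set.Icc (0 : ℝ) 1) m)
    (hcont : ContinuousOn m (Set.Icc (0 : ℝ) 1))
    (haff : ∀ x y t : ℝ, ustar ((1 - t) * x + t * y) = (1 - t) * ustar x + t * ustar y)
    (hle : ∀ p ∈ Set.Icc (0 : ℝ) 1, ustar p ≤ m p)
    (hP : {p ∈ Set.Icc (0 : ℝ) 1 | m p = ustar p}.Nonempty) :
    (⋂ k : ℕ, Qseq m ustar δ k).Nonempty ∧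
    sInf (⋂ k : ℕ, Qseq m ustar δ k) ∈ {p ∈ Set.Icc (0 : ℝ) 1 | m p = ustar p} ∧
    sInf (⋂ k : ℕ, Qseq m ustar δ k)
      = sInf {p ∈ Set.Icc (0 : ℝ) 1 | m p = ustar p} := by
  obtain ⟨hδ0, hδ1⟩ := hδ
  set P : Set ℝ := {p ∈ Set.Icc (0 : ℝ) 1 | m p = ustar p} with hPdef
  set Q : ℕ → Set ℝ := Qseq m ustar δ with hQdef
  -- ustar is affine, hence continuous
  have hust : ∀ q : ℝ, ustar q = (1 - q) * ustar 0 + q * ustar 1 := by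
    intro q
    have h := haff 0 1 q
    simpa using h
  have hucont : Continuous ustar := by
    have : ustar = fun q => (1 - q) * ustar 0 + q * ustar 1 := funext hust
    rw [this]
    exact ((continuous_const.sub continuous_id).mul continuous_const).add
      (continuous_id.mul continuous_const)
  -- basic structural facts
  have hmono : ∀ k, Q (k + 1) ⊆ Q k := by
    intro k q hq
    have hq' : q ∈ Qseq m ustar δ (k + 1) := hq
    rw [Qseq] at hq'
    by_cases h : Qseq m ustar δ k = ∅
    · rw [if_pos h] at hq'
      exact absurd hq' (Set.notMem_empty q)
    · rw [if_neg h] at hq'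
      exact hq'.1
  have hsub : ∀ k, Q k ⊆ Set.Icc (0 : ℝ) 1 := by
    intro k; induction k with
    | zero => exact fun q h => h
    | succ k ih => exact fun q h => ih (hmono k h)
  have hanti : Antitone Q := antitone_nat_of_succ_le hmono
  have hbddQ : ∀ k, BddBelow (Q k) :=
    fun k => (bddBelow_Icc : BddBelow (Set.Icc (0:ℝ) 1)).mono (hsub k)
  have hPsub : P ⊆ Set.Icc 0 1 := fun p hp => hp.1
  have hPbdd : BddBelow P := (bddBelow_Icc : BddBelow (Set.Icc (0:ℝ) 1)).mono hPsub
  have hPclosed : IsClosed P := by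
    have hPeq : P = Set.Icc (0:ℝ) 1 ∩ (fun p => m p - ustar p) ⁻¹' {0} := by
      ext p
      simp only [hPdef, Set.mem_setOf_eq, Set.mem_inter_iff, Set.mem_preimage,
        Set.mem_singleton_iff, sub_eq_zero]
    rw [hPeq]
    exact (hcont.sub hucont.continuousOn).preimage_isClosed_of_isClosed isClosed_Icc
      isClosed_singleton
  -- P ⊆ Q k for all k
  have hPQ : ∀ k, P ⊆ Q k := by
    intro k; induction k with
    | zero => exact hPsub
    | succ k ih =>
      intro q hq
      have hqk : q ∈ Q k := ih hq
      have hne : Q k ≠ ∅ := Set.nonempty_iff_ne_empty.mp ⟨q, hqk⟩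
      have hqI : q ∈ Set.Icc (0:ℝ) 1 := hsub k hqk
      have ha0 : (0:ℝ) ≤ sInf (Q k) := le_csInf ⟨q, hqk⟩ (fun x hx => (hsub k hx).1)
      have haq : sInf (Q k) ≤ q := csInf_le (hbddQ k) hqk
      have haI : sInf (Q k) ∈ Set.Icc (0:ℝ) 1 := ⟨ha0, haq.trans hqI.2⟩
      have hum : ustar q ≤
          (if sInf (Q k) < 1 then
              ((1 - q) * m (sInf (Q k)) + (q - sInf (Q k)) * m 1) / (1 - sInf (Q k))
            else m 1) := by
        by_cases hlt : sInf (Q k) < 1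
        · rw [if_pos hlt]
          set a := sInf (Q k) with ha
          have hd : (0:ℝ) < 1 - a := by linarith
          have hd' : (1:ℝ) - a ≠ 0 := ne_of_gt hd
          set t : ℝ := (q - a) / (1 - a) with ht
          have ht0 : 0 ≤ t := div_nonneg (by linarith) hd.le
          have ht1 : 0 ≤ 1 - t := by
            have h1t : 1 - t = (1 - q) / (1 - a) := by rw [ht]; field_simp; ring
            rw [h1t]; exact div_nonneg (by linarith [hqI.2]) hd.le
          have hq_comb : (1 - t) * a + t * 1 = q := by rw [ht]; field_simp; ring
          have hueq : ustar q = (1 - t) * ustar a + t * ustar 1 := by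
            rw [← hq_comb]; exact haff a 1 t
          have h1 : (1 - t) * ustar a ≤ (1 - t) * m a :=
            mul_le_mul_of_nonneg_left (hle a haI) ht1
          have h2 : t * ustar 1 ≤ t * m 1 :=
            mul_le_mul_of_nonneg_left (hle 1 ⟨zero_le_one, le_refl 1⟩) ht0
          have hchord : ((1 - q) * m a + (q - a) * m 1) / (1 - a)
              = (1 - t) * m a + t * m 1 := by
            rw [ht]; field_simp; try ring
          rw [hchord, hueq]
          linarith
        · rw [if_neg hlt]
          push_neg at hlt
          have hq1 : q = 1 := le_antisymm hqI.2 (hlt.trans haq)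
          rw [hq1]
          exact hle 1 ⟨zero_le_one, le_refl 1⟩
      have hmq : m q = ustar q := hq.2
      show q ∈ Qseq m ustar δ (k + 1)
      rw [Qseq, if_neg hne]
      refine ⟨hqk, ?_⟩
      have hmul := mul_le_mul_of_nonneg_left hum hδ0.le
      simp only [ge_iff_le, hmq]
      nlinarith
  have hQne : ∀ k, (Q k).Nonempty := fun k => hP.imp (fun p hp => hPQ k hp)
  -- each Q k is closed
  have hQclosed : ∀ k, IsClosed (Q k) := by
    intro k; induction k with
    | zero => exact isClosed_Icc
    | succ k ih =>
      have hne : Q k ≠ ∅ := Set.nonempty_iff_ne_empty.mp (hQne k)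
      have hQeq : Q (k + 1) = Q k ∩
          (fun q => m q - ((1 - δ) * ustar q +
            δ * (if sInf (Q k) < 1 then
                ((1 - q) * m (sInf (Q k)) + (q - sInf (Q k)) * m 1) / (1 - sInf (Q k))
              else m 1))) ⁻¹' Set.Iic 0 := by
        ext q
        show q ∈ Qseq m ustar δ (k + 1) ↔ _
        rw [Qseq, if_neg hne]
        simp only [Set.mem_setOf_eq, Set.mem_inter_iff, Set.mem_preimage, Set.mem_Iic,
          ge_iff_le, sub_nonpos]
        exact Iff.rfl
      rw [hQeq]
      have hcg : ContinuousOn (fun q => m q - ((1 - δ) * ustar q +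
            δ * (if sInf (Q k) < 1 then
                ((1 - q) * m (sInf (Q k)) + (q - sInf (Q k)) * m 1) / (1 - sInf (Q k))
              else m 1))) (Q k) := by
        apply ContinuousOn.mono _ (hsub k)
        apply hcont.sub
        apply Continuous.continuousOn
        by_cases hlt : sInf (Q k) < 1
        · simp only [if_pos hlt]
          have hd : (1:ℝ) - sInf (Q k) ≠ 0 := by
            intro h; rw [sub_eq_zero] at h; exact absurd h.symm (ne_of_lt hlt)
          exact (continuous_const.mul hucont).add (continuous_const.mul
            ((((continuous_const.sub continuous_id).mul continuous_const).add
              ((continuous_id.sub continuous_const).mul continuous_const)).div_const _))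
        · simp only [if_neg hlt]
          exact (continuous_const.mul hucont).add continuous_const
      exact hcg.preimage_isClosed_of_isClosed ih isClosed_Iic
  -- the intersection
  set T : Set ℝ := ⋂ k : ℕ, Q k with hTdef
  have hPT : P ⊆ T := Set.subset_iInter hPQ
  have hTne : T.Nonempty := hP.imp (fun p hp => hPT hp)
  have hTsub : T ⊆ Set.Icc (0:ℝ) 1 := (Set.iInter_subset Q 0).trans (hsub 0)
  have hTbdd : BddBelow T := (bddBelow_Icc : BddBelow (Set.Icc (0:ℝ) 1)).mono hTsub
  have hTclosed : IsClosed T := isClosed_iInter hQclosed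
  have hTQ : ∀ k, T ⊆ Q k := fun k => Set.iInter_subset Q k
  have hqT : sInf T ∈ T := hTclosed.csInf_mem hTne hTbdd
  have hpP : sInf P ∈ P := hPclosed.csInf_mem hP hPbdd
  have hle1 : sInf T ≤ sInf P := csInf_le_csInf hTbdd hP hPT
  have hqI : sInf T ∈ Set.Icc (0:ℝ) 1 := hTsub hqT
  -- main claim
  have hmem : sInf T ∈ P := by
    rcases eq_or_lt_of_le hle1 with heq | hlt
    · rw [heq]; exact hpP
    · -- sInf T < sInf P ≤ 1
      have hq1 : sInf T < 1 := lt_of_lt_of_le hlt (hpP.1.2)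
      set q := sInf T with hq
      set a : ℕ → ℝ := fun k => sInf (Q k) with hadef
      have haQ : ∀ k, a k ∈ Q k := fun k => (hQclosed k).csInf_mem (hQne k) (hbddQ k)
      have haq : ∀ k, a k ≤ q := fun k => csInf_le (hbddQ k) (hTQ k hqT)
      have hamono : Monotone a := by
        intro j k hjk
        exact le_csInf (hQne k) (fun x hx => csInf_le (hbddQ j) (hanti hjk hx))
      have hbdd : BddAbove (Set.range a) := ⟨q, by rintro x ⟨k, rfl⟩; exact haq k⟩
      have htendL : Filter.Tendsto a Filter.atTop (nhds (⨆ k, a k)) :=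
        tendsto_atTop_ciSup hamono hbdd
      have hLq : (⨆ k, a k) = q := by
        apply le_antisymm (ciSup_le haq)
        have hLT : (⨆ k, a k) ∈ T := by
          apply Set.mem_iInter.mpr
          intro j
          refine (hQclosed j).mem_of_tendsto htendL ?_
          filter_upwards [Filter.eventually_ge_atTop j] with k hk
          exact hanti hk (haQ k)
        exact csInf_le hTbdd hLT
      have htend : Filter.Tendsto a Filter.atTop (nhds q) := hLq ▸ htendL
      -- the key inequality for each k
      have hkey : ∀ k, m q ≤ (1 - δ) * ustar q +
          δ * (((1 - q) * m (a k) + (q - a k) * m 1) / (1 - a k)) := by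
        intro k
        have hqk1 : q ∈ Q (k + 1) := hTQ (k + 1) hqT
        have hne : Q k ≠ ∅ := Set.nonempty_iff_ne_empty.mp (hQne k)
        have hak1 : a k < 1 := lt_of_le_of_lt (haq k) hq1
        have : q ∈ Qseq m ustar δ (k + 1) := hqk1
        rw [Qseq, if_neg hne] at this
        have h2 := this.2
        rw [if_pos hak1] at h2
        exact h2
      -- pass to the limit
      have hma : Filter.Tendsto (fun k => m (a k)) Filter.atTop (nhds (m q)) := by
        have hwithin : Filter.Tendsto a Filter.atTop (nhdsWithin q (Set.Icc (0:ℝ) 1)) := by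
          rw [tendsto_nhdsWithin_iff]
          exact ⟨htend, Filter.Eventually.of_forall (fun k => hsub k (haQ k))⟩
        exact (hcont q hqI).tendsto.comp hwithin
      have hdne : (1:ℝ) - q ≠ 0 := by linarith
      have htendF : Filter.Tendsto
          (fun k => (1 - δ) * ustar q +
            δ * (((1 - q) * m (a k) + (q - a k) * m 1) / (1 - a k)))
          Filter.atTop
          (nhds ((1 - δ) * ustar q +
            δ * (((1 - q) * m q + (q - q) * m 1) / (1 - q)))) := by
        apply Filter.Tendsto.const_add
        apply Filter.Tendsto.const_mul
        exact Filter.Tendsto.div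
          ((tendsto_const_nhds.mul hma).add ((tendsto_const_nhds.sub htend).mul tendsto_const_nhds))
          (tendsto_const_nhds.sub htend) hdne
      have hlim : m q ≤ (1 - δ) * ustar q +
          δ * (((1 - q) * m q + (q - q) * m 1) / (1 - q)) :=
        ge_of_tendsto htendF (Filter.Eventually.of_forall hkey)
      have hfrac : ((1 - q) * m q + (q - q) * m 1) / (1 - q) = m q := by
        field_simp
        ring
      rw [hfrac] at hlim
      have humq : ustar q ≤ m q := hle q hqI
      have heqq : m q = ustar q := by nlinarith
      exact ⟨hqI, heqq⟩
  refine ⟨hTne, hmem, le_antisymm hle1 (csInf_le hPbdd hmem)⟩
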